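/- For a contractive i.f.s. of invertible maps with attractor A, the set of top addresses Σ_top = τ(A) is shift invariant: σ(Σ_top) = Σ_top. Moreover, for j ∈ Σ_top, σ(j) = τ(π(σ(j))). -/

import Mathlib

/-- `compN f j N = f_{j 0} ∘ f_{j 1} ∘ ⋯ ∘ f_{j (N-1)}`. -/
def compN {m : ℕ} {E : Type*} (f : Fin m → E ≃ E) : (ℕ → Fin m) → ℕ → E → E
  | _, 0 => id
  | j, (N + 1) => f (j 0) ∘ compN f (fun n => j (n + 1)) N

/-- Lexicographic order on `{1,…,m}^ℕ`. -/
def lexLe {m : ℕ} (j k : ℕ → Fin m) : Prop :=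
  j = k ∨ ∃ n : ℕ, (∀ i < n, j i = k i) ∧ j n < k n

/-- Prepend a digit to a sequence. -/
def consSeq {m : ℕ} (i : Fin m) (a : ℕ → Fin m) : ℕ → Fin m
  | 0 => i
  | (n + 1) => a n

lemma lexLe_antisymm {m : ℕ} {j k : ℕ → Fin m} (h1 : lexLe j k) (h2 : lexLe k j) :
    j = k := by
  rcases h1 with rfl | ⟨n, hn, hlt⟩
  · rfl
  rcases h2 with rfl | ⟨n', hn', hlt'⟩
  · exact absurd hlt (lt_irrefl _)
  rcases lt_trichotomy n n' with h | rfl | h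
  · exact absurd ((hn' n h).symm ▸ hlt) (lt_irrefl _)
  · exact absurd (hlt.trans hlt') (lt_irrefl _)
  · exact absurd ((hn n' h) ▸ hlt') (lt_irrefl _)

lemma lexLe_cons {m : ℕ} (i : Fin m) {a b : ℕ → Fin m} (h : lexLe a b) :
    lexLe (consSeq i a) (consSeq i b) := by
  rcases h with rfl | ⟨n, hn, hlt⟩
  · exact Or.inl rfl
  · refine Or.inr ⟨n + 1, ?_, hlt⟩
    intro i' hi'
    cases i' with
    | zero => rfl
    | succ i'' => exact hn i'' (by omega)

lemma lexLe_tail {m : ℕ} {a b : ℕ → Fin m} (h : lexLe a b) (h0 : a 0 = b 0) :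
    lexLe (fun n => a (n + 1)) (fun n => b (n + 1)) := by
  rcases h with rfl | ⟨n, hn, hlt⟩
  · exact Or.inl rfl
  cases n with
  | zero => exact absurd (h0 ▸ hlt) (lt_irrefl _)
  | succ n' =>
    exact Or.inr ⟨n', fun i hi => hn (i + 1) (by omega), hlt⟩

/-- For a contractive i.f.s. of invertible maps with attractor A, the set of
top addresses Σ_top = τ(A) is shift invariant: σ(Σ_top) = Σ_top; moreover for
j ∈ Σ_top, σ(j) = τ(π(σ(j))). -/
theorem top_addresses_shift_invariant {X : Type*} [MetricSpace X] [CompleteSpace X]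
    {m : ℕ} (hm : 2 ≤ m) (f : Fin m → X ≃ X)
    (c : ℝ) (hc0 : 0 ≤ c) (hc1 : c < 1)
    (hlip : ∀ i : Fin m, ∀ x y : X, dist (f i x) (f i y) ≤ c * dist x y)
    (A : Set X) (hAne : A.Nonempty) (hAcp : IsCompact A)
    (hA : A = ⋃ i : Fin m, (f i : X → X) '' A)
    (π : (ℕ → Fin m) → X)
    (hπ : ∀ (j : ℕ → Fin m) (x : X),
      Filter.Tendsto (fun N => compN f j N x) Filter.atTop (nhds (π j)))
    (τ : X → (ℕ → Fin m))
    (hτ : ∀ x ∈ A, π (τ x) = x ∧ ∀ k : ℕ → Fin m, π k = x → lexLe k (τ x)) :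
    ((fun j : ℕ → Fin m => fun n : ℕ => j (n + 1)) '' (τ '' A) = τ '' A) ∧
    (∀ j ∈ τ '' A, (fun n : ℕ => j (n + 1)) = τ (π (fun n : ℕ => j (n + 1)))) := by
  obtain ⟨x₀, hx₀⟩ := hAne
  -- f i maps A into A
  have hfA : ∀ i : Fin m, ∀ x ∈ A, f i x ∈ A := by
    intro i x hx
    rw [hA]
    exact Set.mem_iUnion.2 ⟨i, ⟨x, hx, rfl⟩⟩
  have hcont : ∀ i : Fin m, Continuous (f i : X → X) := by
    intro i
    exact (LipschitzWith.of_dist_le_mul (K := ⟨c, hc0⟩)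
      (fun x y => by exact hlip i x y)).continuous
  -- π j ∈ A for all j
  have hπA : ∀ j : ℕ → Fin m, π j ∈ A := by
    intro j
    have hmem : ∀ N : ℕ, ∀ j : ℕ → Fin m, compN f j N x₀ ∈ A := by
      intro N
      induction N with
      | zero => intro j; exact hx₀
      | succ N ih =>
        intro j
        exact hfA (j 0) _ (ih fun n => j (n + 1))
    exact hAcp.isClosed.mem_of_tendsto (hπ j x₀)
      (Filter.Eventually.of_forall fun N => hmem N j)
  -- recursion: π j = f (j 0) (π (σ j))
  have hrec : ∀ j : ℕ → Fin m, π j = f (j 0) (π fun n => j (n + 1)) := by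
    intro j
    have h1 : Filter.Tendsto (fun N => compN f j (N + 1) x₀) Filter.atTop (nhds (π j)) :=
      (hπ j x₀).comp (Filter.tendsto_add_atTop_nat 1)
    have h2 : Filter.Tendsto (fun N => compN f j (N + 1) x₀) Filter.atTop
        (nhds (f (j 0) (π fun n => j (n + 1)))) := by
      have := ((hcont (j 0)).tendsto _).comp (hπ (fun n => j (n + 1)) x₀)
      exact this
    exact tendsto_nhds_unique h1 h2
  -- key maximality for shifted top addresses
  have hkey : ∀ x ∈ A, ∀ k : ℕ → Fin m, π k = π (fun n => τ x (n + 1)) →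
      lexLe k (fun n => τ x (n + 1)) := by
    intro x hx k hk
    set i := τ x 0 with hi
    have hcons : π (consSeq i k) = x := by
      have h1 : π (consSeq i k) = f i (π k) := hrec (consSeq i k)
      rw [h1, hk, ← hrec (τ x), (hτ x hx).1]
    have hle : lexLe (consSeq i k) (τ x) := (hτ x hx).2 _ hcons
    have := lexLe_tail hle rfl
    exact this
  -- second conjunct
  have hsecond : ∀ j ∈ τ '' A, (fun n : ℕ => j (n + 1)) = τ (π fun n : ℕ => j (n + 1)) := by
    rintro j ⟨x, hx, rfl⟩
    set y := π (fun n => τ x (n + 1)) with hy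
    have hyA : y ∈ A := hπA _
    have h1 : lexLe (fun n => τ x (n + 1)) (τ y) := (hτ y hyA).2 _ rfl
    have h2 : lexLe (τ y) (fun n => τ x (n + 1)) := hkey x hx (τ y) ((hτ y hyA).1)
    exact lexLe_antisymm h1 h2
  refine ⟨?_, hsecond⟩
  ext j
  constructor
  · rintro ⟨j', ⟨x, hx, rfl⟩, rfl⟩
    have := hsecond (τ x) ⟨x, hx, rfl⟩
    exact ⟨_, hπA _, this.symm⟩
  · rintro ⟨x, hx, rfl⟩
    -- show τ x = σ (τ (f top x)) where top = m - 1
    have h0 : 0 < m := by omega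
    set i : Fin m := ⟨m - 1, by omega⟩ with hidef
    have hiTop : ∀ i' : Fin m, i' ≤ i := by
      intro i'
      have := i'.isLt
      exact Fin.le_def.2 (by simp [hidef]; omega)
    set y := f i x with hy
    have hyA : y ∈ A := hfA i x hx
    have hτy : τ y = consSeq i (τ x) := by
      apply lexLe_antisymm
      · -- τ y ≤ cons i (τ x)
        rcases lt_or_eq_of_le (hiTop (τ y 0)) with hlt | heq
        · exact Or.inr ⟨0, fun i' hi' => absurd hi' (by omega), hlt⟩
        · -- first digit agrees; peel it off
          have hr : π (τ y) = f (τ y 0) (π fun n => τ y (n + 1)) := hrec (τ y)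
          rw [(hτ y hyA).1, heq, hy] at hr
          have hx' : π (fun n => τ y (n + 1)) = x := (f i).injective hr.symm
          have hle : lexLe (fun n => τ y (n + 1)) (τ x) := (hτ x hx).2 _ hx'
          have := lexLe_cons i hle
          have hτyeq : consSeq i (fun n => τ y (n + 1)) = τ y := by
            funext n
            cases n with
            | zero => exact heq.symm
            | succ n' => rfl
          rwa [hτyeq] at this
      · -- cons i (τ x) ≤ τ y by maximality
        apply (hτ y hyA).2
        have := hrec (consSeq i (τ x))
        rw [this]
        show f i (π fun n => consSeq i (τ x) (n + 1)) = y
        have : (fun n => consSeq i (τ x) (n + 1)) = τ x := rfl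
        rw [this, (hτ x hx).1]
    refine ⟨τ y, ⟨y, hyA, rfl⟩, ?_⟩
    funext n
    rw [hτy]
    rfl
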